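/- Let p be a prime, F a finite field with Fintype.card F = q where q ≡ 1 (mod p), and V an F-vector space with finrank V = n. Then for every 0 ≤ k ≤ n, the number of k-dimensional subspaces of V is congruent to the ordinary binomial coefficient: (card {U : Submodule F V | finrank U = k} : ZMod p) = (Nat.choose n k : ZMod p). -/

import Mathlib

open Module

section Aux

variable {F : Type*} [Field F] {n : ℕ}

private def sp (F : Type*) [Field F] {n : ℕ} (S : Finset (Fin n)) : Submodule F (Fin n → F) :=
  Submodule.span F ((fun i => Pi.single i (1 : F)) '' ↑S)

private lemma single_mem_sp_iff {S : Finset (Fin n)} {i : Fin n} :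
    Pi.single i (1 : F) ∈ sp F S ↔ i ∈ S := by
  constructor
  · intro h
    by_contra hi
    have hle : sp F S ≤ LinearMap.ker (LinearMap.proj (R := F) (φ := fun _ : Fin n => F) i) := by
      rw [sp, Submodule.span_le]
      rintro _ ⟨j, hj, rfl⟩
      simp only [SetLike.mem_coe, LinearMap.mem_ker, LinearMap.proj_apply]
      rw [Pi.single_apply]
      exact if_neg (by rintro rfl; exact hi hj)
    have := hle h
    simp only [LinearMap.mem_ker, LinearMap.proj_apply, Pi.single_eq_same] at this
    exact one_ne_zero this
  · intro h
    exact Submodule.subset_span ⟨i, h, rfl⟩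

private lemma finrank_sp (S : Finset (Fin n)) : finrank F (sp F S) = S.card := by
  classical
  have hfam : (fun j : S => (Pi.single (j : Fin n) (1 : F) : Fin n → F))
      = (⇑(Pi.basisFun F (Fin n)) ∘ Subtype.val) :=
    funext fun j => (Pi.basisFun_apply F (Fin n) (j : Fin n)).symm
  have hli : LinearIndependent F (fun j : S => (Pi.single (j : Fin n) (1 : F) : Fin n → F)) := by
    rw [hfam]
    exact (Pi.basisFun F (Fin n)).linearIndependent.comp Subtype.val Subtype.val_injective
  have h2 : sp F S = Submodule.span F (Set.range fun j : S => (Pi.single (j : Fin n) (1 : F) : Fin n → F)) := by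
    rw [sp, Set.image_eq_range]; rfl
  rw [h2, finrank_span_eq_card hli, Fintype.card_coe]

end Aux
section Act
variable {F : Type*} [Field F] {n : ℕ} (ζ : Fˣ)

private def rho (g : Fin n → Subgroup.zpowers ζ) : (Fin n → F) ≃ₗ[F] (Fin n → F) :=
  LinearEquiv.piCongrRight fun i => DistribMulAction.toLinearEquiv F F ((g i : Fˣ))

private lemma rho_apply (g : Fin n → Subgroup.zpowers ζ) (x : Fin n → F) (i : Fin n) :
    rho ζ g x i = ((g i : Fˣ) : F) * x i := by
  simp [rho, DistribMulAction.toLinearEquiv, Units.smul_def]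

private lemma rho_mul (g h : Fin n → Subgroup.zpowers ζ) (x : Fin n → F) :
    rho ζ (g * h) x = rho ζ g (rho ζ h x) := by
  funext i
  simp [rho_apply, mul_assoc]

private lemma rho_one (x : Fin n → F) : rho ζ (1 : Fin n → Subgroup.zpowers ζ) x = x := by
  funext i; simp [rho_apply]

private lemma map_rho_mul (g h : Fin n → Subgroup.zpowers ζ) (U : Submodule F (Fin n → F)) :
    U.map (rho ζ (g * h) : (Fin n → F) →ₗ[F] (Fin n → F))
      = (U.map (rho ζ h : (Fin n → F) →ₗ[F] (Fin n → F))).map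
          (rho ζ g : (Fin n → F) →ₗ[F] (Fin n → F)) := by
  rw [← Submodule.map_comp]
  congr 1
  ext x i
  simp [rho_mul]

private lemma map_rho_one (U : Submodule F (Fin n → F)) :
    U.map (rho ζ (1 : Fin n → Subgroup.zpowers ζ) : (Fin n → F) →ₗ[F] (Fin n → F)) = U := by
  have : (rho ζ (1 : Fin n → Subgroup.zpowers ζ) : (Fin n → F) →ₗ[F] (Fin n → F))
      = LinearMap.id := by ext x i; simp [rho_one]
  rw [this, Submodule.map_id]

end Act

section Key
variable {F : Type*} [Field F] [Fintype F]

private lemma key (p : ℕ) (hp : p.Prime) (hpF : (p : F) ≠ 0) (ζ : Fˣ)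
    (hζ : orderOf ζ = p) (n k : ℕ) :
    Nat.card {U : Submodule F (Fin n → F) // finrank F U = k} ≡ n.choose k [MOD p] := by
  classical
  haveI : Fact p.Prime := ⟨hp⟩
  set G := Fin n → Subgroup.zpowers ζ with hGdef
  letI actSub : MulAction G (Submodule F (Fin n → F)) :=
    { smul := fun g U => U.map (rho ζ g : (Fin n → F) →ₗ[F] (Fin n → F))
      one_smul := fun U => map_rho_one ζ U
      mul_smul := fun g h U => map_rho_mul ζ g h U }
  have smul_def : ∀ (g : G) (U : Submodule F (Fin n → F)),
      g • U = U.map (rho ζ g : (Fin n → F) →ₗ[F] (Fin n → F)) := fun _ _ => rfl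
  set X := {U : Submodule F (Fin n → F) // finrank F U = k} with hXdef
  letI actX : MulAction G X :=
    { smul := fun g U => ⟨g • U.1, by
        rw [smul_def, LinearEquiv.finrank_map_eq]; exact U.2⟩
      one_smul := fun U => Subtype.ext (one_smul G U.1)
      mul_smul := fun g h U => Subtype.ext (mul_smul g h U.1) }
  have smulX_def : ∀ (g : G) (U : X), (g • U).1 = g • U.1 := fun _ _ => rfl
  haveI : Finite (Submodule F (Fin n → F)) :=
    Finite.of_injective _ (SetLike.coe_injective (A := Submodule F (Fin n → F)))
  have hG : IsPGroup p G := by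
    apply IsPGroup.of_card (n := n)
    have hz : Nat.card ↥(Subgroup.zpowers ζ) = p := by rw [Nat.card_zpowers, hζ]
    rw [Nat.card_pi]
    rw [Finset.prod_congr rfl (fun i _ => hz), Finset.prod_const, Finset.card_univ,
      Fintype.card_fin]
  have hcong := hG.card_modEq_card_fixedPoints X
  -- fixed point membership
  have hXfix : ∀ (U : X), U ∈ MulAction.fixedPoints G X ↔
      ∀ g : G, (U.1).map (rho ζ g : (Fin n → F) →ₗ[F] (Fin n → F)) = U.1 := by
    intro U
    constructor
    · intro h g
      have := h g
      rw [Subtype.ext_iff, smulX_def, smul_def] at this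
      exact this
    · intro h g
      rw [Subtype.ext_iff, smulX_def, smul_def]
      exact h g
  -- basic facts about ζ
  have hζF1 : ((ζ : F)) ≠ 1 := by
    intro h
    have : ζ = 1 := Units.ext (by simpa using h)
    rw [this, orderOf_one] at hζ
    exact hp.one_lt.ne' hζ.symm
  have hζFp : (ζ : F) ^ p = 1 := by
    rw [← Units.val_pow_eq_pow_val, ← hζ, pow_orderOf_eq_one, Units.val_one]
  have hgeom : ∑ j ∈ Finset.range p, (ζ : F) ^ j = 0 := by
    rw [geom_sum_eq hζF1, hζFp, sub_self, zero_div]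
  -- the "coordinate support" finset
  set SU : Submodule F (Fin n → F) → Finset (Fin n) :=
    fun U => Finset.univ.filter (fun i => (Pi.single i (1 : F) : Fin n → F) ∈ U) with hSUdef
  -- Step A : fixed subspaces contain coordinate components of their elements
  have stepA : ∀ (U : Submodule F (Fin n → F)),
      (∀ g : G, U.map (rho ζ g : (Fin n → F) →ₗ[F] (Fin n → F)) = U) →
      ∀ u ∈ U, ∀ i, (Pi.single i (u i) : Fin n → F) ∈ U := by
    intro U hU u hu i
    set z : Subgroup.zpowers ζ := ⟨ζ, Subgroup.mem_zpowers ζ⟩ with hz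
    set gj : ℕ → G := fun j l => if l = i then z ^ j else 1 with hgj
    have hmem : ∀ j, rho ζ (gj j) u ∈ U := fun j => by
      rw [← hU (gj j)]; exact Submodule.mem_map_of_mem hu
    have hsum : (∑ j ∈ Finset.range p, rho ζ (gj j) u) ∈ U :=
      Submodule.sum_mem U fun j _ => hmem j
    have hval : (∑ j ∈ Finset.range p, rho ζ (gj j) u)
        = (p : F) • (u - Pi.single i (u i)) := by
      funext l
      rw [Finset.sum_apply]
      by_cases hl : l = i
      · subst hl
        have hterm : ∀ j, rho ζ (gj j) u l = (ζ : F) ^ j * u l := by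
          intro j
          rw [rho_apply]
          congr 1
          simp [hgj, hz]
        simp only [hterm]
        rw [← Finset.sum_mul, hgeom, zero_mul]
        simp [Pi.smul_apply]
      · have hterm : ∀ j, rho ζ (gj j) u l = u l := by
          intro j
          rw [rho_apply]
          have : gj j l = 1 := if_neg hl
          rw [this]
          simp
        simp only [hterm]
        rw [Finset.sum_const, Finset.card_range]
        have hsingle : (Pi.single i (u i) : Fin n → F) l = 0 := by
          rw [Pi.single_apply]; exact if_neg hl
        simp [hsingle, nsmul_eq_mul]
    have h1 : u - Pi.single i (u i) ∈ U := by
      have h2 := U.smul_mem ((p : F)⁻¹) hsum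
      rw [hval, smul_smul, inv_mul_cancel₀ hpF, one_smul] at h2
      exact h2
    have h3 := U.sub_mem hu h1
    rwa [sub_sub_cancel] at h3
  -- fixed subspaces are coordinate subspaces
  have hfixU : ∀ U : Submodule F (Fin n → F),
      (∀ g : G, U.map (rho ζ g : (Fin n → F) →ₗ[F] (Fin n → F)) = U) →
      U = sp F (SU U) := by
    intro U hU
    apply le_antisymm
    · intro u hu
      have hrepr : u = ∑ i : Fin n, (Pi.single i (u i) : Fin n → F) :=
        (Finset.univ_sum_single u).symm
      rw [hrepr]
      apply Submodule.sum_mem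
      intro i _
      by_cases hui : u i = 0
      · rw [hui]
        simp
      · have h1 : (Pi.single i (u i) : Fin n → F) ∈ U := stepA U hU u hu i
        have h2 : (Pi.single i (1 : F) : Fin n → F) ∈ U := by
          have h3 := U.smul_mem (u i)⁻¹ h1
          rwa [← Pi.single_smul, smul_eq_mul, inv_mul_cancel₀ hui] at h3
        have hiS : i ∈ SU U := by simp [hSUdef, h2]
        have h4 : (Pi.single i (u i) : Fin n → F)
            = (u i) • (Pi.single i (1 : F) : Fin n → F) := by
          rw [← Pi.single_smul, smul_eq_mul, mul_one]
        rw [h4]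
        exact Submodule.smul_mem _ _ (single_mem_sp_iff.mpr hiS)
    · rw [sp, Submodule.span_le]
      rintro _ ⟨j, hj, rfl⟩
      rw [Finset.mem_coe, hSUdef, Finset.mem_filter] at hj
      exact hj.2
  -- coordinate subspaces are fixed
  have hspfix : ∀ (g : G) (S : Finset (Fin n)),
      (sp F S).map (rho ζ g : (Fin n → F) →ₗ[F] (Fin n → F)) = sp F S := by
    intro g S
    have hrg : ∀ i : Fin n, rho ζ g (Pi.single i (1 : F))
        = ((g i : Fˣ) : F) • (Pi.single i (1 : F) : Fin n → F) := by
      intro i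
      funext l
      rw [rho_apply, Pi.smul_apply, smul_eq_mul]
      by_cases hl : l = i
      · subst hl; rfl
      · rw [Pi.single_apply, if_neg hl, mul_zero, mul_zero]
    have hinv : ∀ i : Fin n, (((g i)⁻¹ : Fˣ) : F) * ((g i : Fˣ) : F) = 1 := by
      intro i
      rw [← Units.val_mul]
      norm_cast
      simp
    rw [sp, Submodule.map_span]
    apply le_antisymm
    · rw [Submodule.span_le]
      rintro _ ⟨_, ⟨i, hi, rfl⟩, rfl⟩
      have hm : ((g i : Fˣ) : F) • (Pi.single i (1 : F) : Fin n → F)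
          ∈ Submodule.span F ((fun i => (Pi.single i (1 : F) : Fin n → F)) '' ↑S) :=
        Submodule.smul_mem _ _ (Submodule.subset_span ⟨i, hi, rfl⟩)
      simpa [hrg i] using hm
    · rw [Submodule.span_le]
      rintro _ ⟨i, hi, rfl⟩
      have hm : rho ζ g (Pi.single i (1 : F))
          ∈ ⇑(rho ζ g : (Fin n → F) →ₗ[F] (Fin n → F))
            '' ((fun i => (Pi.single i (1 : F) : Fin n → F)) '' ↑S) :=
        ⟨Pi.single i (1 : F), ⟨i, hi, rfl⟩, rfl⟩
      have hm2 := Submodule.smul_mem (Submodule.span F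
        (⇑(rho ζ g : (Fin n → F) →ₗ[F] (Fin n → F))
          '' ((fun i => (Pi.single i (1 : F) : Fin n → F)) '' ↑S)))
        ((((g i)⁻¹ : Fˣ) : F)) (Submodule.subset_span hm)
      simp [hrg i, smul_smul, hinv i] at hm2 ⊢
      exact ⟨_, hm2, by simp⟩
  -- the bijection between fixed points and k-element subsets
  have e : MulAction.fixedPoints G X ≃ {S : Finset (Fin n) // S.card = k} :=
    { toFun := fun U => ⟨SU U.1.1, by
        have h4 := hfixU U.1.1 ((hXfix U.1).mp U.2)
        have h5 := U.1.2
        rw [h4, finrank_sp] at h5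
        exact h5⟩
      invFun := fun S => ⟨⟨sp F S.1, by rw [finrank_sp]; exact S.2⟩,
        (hXfix _).mpr fun g => hspfix g S.1⟩
      left_inv := fun U => by
        apply Subtype.ext
        apply Subtype.ext
        exact (hfixU U.1.1 ((hXfix U.1).mp U.2)).symm
      right_inv := fun S => by
        apply Subtype.ext
        show SU (sp F S.1) = S.1
        ext i
        simp [hSUdef, single_mem_sp_iff] }
  have hfixcard : Nat.card (MulAction.fixedPoints G X) = n.choose k := by
    rw [Nat.card_congr e, Nat.card_eq_fintype_card, Fintype.card_finset_len,
      Fintype.card_fin]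
  rw [← hfixcard]
  exact hcong

end Key

theorem stmt_2 (p : ℕ) (hp : p.Prime) (F : Type*) [Field F] [Fintype F]
    (V : Type*) [AddCommGroup V] [Module F V] [FiniteDimensional F V]
    (q n : ℕ) (hq : Fintype.card F = q) (hqp : q ≡ 1 [MOD p])
    (hn : Module.finrank F V = n) (k : ℕ) (hk : k ≤ n) :
    (Nat.card {U : Submodule F V // Module.finrank F U = k} : ZMod p) =
      (Nat.choose n k : ZMod p) := by
  classical
  have hq1 : 1 ≤ q := hq ▸ Fintype.card_pos
  have hdvd : p ∣ q - 1 := (Nat.modEq_iff_dvd' hq1).mp hqp.symm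
  haveI : Fact p.Prime := ⟨hp⟩
  have hdvd' : p ∣ Fintype.card Fˣ := by
    rw [Fintype.card_units, hq]; exact hdvd
  obtain ⟨ζ, hζ⟩ := exists_prime_orderOf_dvd_card p hdvd'
  have hpF : (p : F) ≠ 0 := by
    intro h
    have h1 : ringChar F ∣ p := ringChar.dvd h
    have h2 : (ringChar F).Prime := CharP.char_is_prime F (ringChar F)
    have h3 : ringChar F = p := (Nat.prime_dvd_prime_iff_eq h2 hp).mp h1
    obtain ⟨m, _, hm2⟩ := FiniteField.card F (ringChar F)
    have h4 : p ∣ q := by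
      rw [← hq, hm2, h3]
      exact dvd_pow_self p m.pos.ne'
    have h5 := Nat.dvd_sub h4 hdvd
    rw [Nat.sub_sub_self hq1] at h5
    exact hp.one_lt.ne' (Nat.dvd_one.mp h5)
  let b : Basis (Fin n) F V := (finBasis F V).reindex (finCongr hn)
  let e : V ≃ₗ[F] (Fin n → F) := b.equivFun
  have hE : Nat.card {U : Submodule F V // finrank F U = k}
      = Nat.card {U : Submodule F (Fin n → F) // finrank F U = k} := by
    apply Nat.card_congr
    exact
      { toFun := fun U => ⟨U.1.map (e : V →ₗ[F] (Fin n → F)), by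
          rw [LinearEquiv.finrank_map_eq]; exact U.2⟩
        invFun := fun U => ⟨U.1.map (e.symm : (Fin n → F) →ₗ[F] V), by
          rw [LinearEquiv.finrank_map_eq]; exact U.2⟩
        left_inv := fun U => Subtype.ext (by
          show Submodule.map (e.symm : (Fin n → F) →ₗ[F] V)
            (Submodule.map (e : V →ₗ[F] (Fin n → F)) U.1) = U.1
          rw [← Submodule.map_comp]
          simp)
        right_inv := fun U => Subtype.ext (by
          show Submodule.map (e : V →ₗ[F] (Fin n → F))
            (Submodule.map (e.symm : (Fin n → F) →ₗ[F] V) U.1) = U.1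
          rw [← Submodule.map_comp]
          simp) }
  rw [hE]
  exact (ZMod.natCast_eq_natCast_iff _ _ _).mpr (key p hp hpF ζ hζ n k)
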